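/- For every Lagrangian subspace L of V ⊕ V*, the integer dim ρ(L) − dim(L ∩ V) is even; equivalently, n − dim(L ∩ V) − dim(L ∩ V*) is even. -/

import Mathlib

open Module LinearMap Matrix

/-- The canonical split-signature pairing on `V ⊕ V*`. -/
noncomputable def diracPairing {V : Type*} [AddCommGroup V] [Module ℝ V]
    (x y : V × Module.Dual ℝ V) : ℝ :=
  (x.2 y.1 + y.2 x.1) / 2

/-- `L ⊆ V ⊕ V*` is Lagrangian: `dim L = dim V` and the pairing vanishes on `L`. -/
def IsLagrangian {V : Type*} [AddCommGroup V] [Module ℝ V]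
    (L : Submodule ℝ (V × Module.Dual ℝ V)) : Prop :=
  Module.finrank ℝ L = Module.finrank ℝ V ∧
    ∀ x ∈ L, ∀ y ∈ L, diracPairing x y = 0

/-- A nondegenerate skew-symmetric bilinear form lives on an even-dimensional space. -/
private lemma even_finrank_of_skew_nondeg {E : Type*} [AddCommGroup E] [Module ℝ E]
    [FiniteDimensional ℝ E] (B : LinearMap.BilinForm ℝ E)
    (hskew : ∀ x y, B x y = - B y x) (hnd : B.Nondegenerate) :
    Even (Module.finrank ℝ E) := by
  classical
  let b := Module.finBasis ℝ E
  have hdet := (BilinForm.nondegenerate_iff_det_ne_zero b).mp hnd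
  set M := LinearMap.BilinForm.toMatrix b B with hM
  have hT : M.transpose = -M := by
    ext i j
    simp only [Matrix.transpose_apply, Matrix.neg_apply, hM, LinearMap.BilinForm.toMatrix_apply]
    exact hskew (b j) (b i)
  have h1 : M.det = (-1) ^ (Module.finrank ℝ E) * M.det := by
    conv_lhs => rw [← Matrix.det_transpose M, hT, Matrix.det_neg]
    simp
  rcases Nat.even_or_odd (Module.finrank ℝ E) with h | h
  · exact h
  · exfalso
    rw [h.neg_one_pow] at h1
    apply hdet
    linarith

/-- The rank of an alternating bilinear form is even. -/
private lemma even_finrank_sub_ker {E : Type*} [AddCommGroup E] [Module ℝ E]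
    [FiniteDimensional ℝ E] (B : LinearMap.BilinForm ℝ E) (halt : ∀ x, B x x = 0)
    (N : Submodule ℝ E) (hN : LinearMap.ker B = N) :
    Even (Module.finrank ℝ E - Module.finrank ℝ N) := by
  subst hN
  have hskew : ∀ x y, B x y = - B y x := by
    intro x y
    have h := halt (x + y)
    simp only [map_add, LinearMap.add_apply, halt x, halt y] at h
    linarith
  obtain ⟨W, hW⟩ := Submodule.exists_isCompl (LinearMap.ker B)
  have hnd : (B.restrict W).Nondegenerate := by
    apply LinearMap.BilinForm.Nondegenerate.ofSeparatingLeft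
    intro x hx
    have hker : (x : E) ∈ LinearMap.ker B := by
      rw [LinearMap.mem_ker]
      apply LinearMap.ext
      intro y
      have hy : y ∈ (LinearMap.ker B) ⊔ W := by
        rw [hW.sup_eq_top]; trivial
      obtain ⟨k, hk, w, hw, rfl⟩ := Submodule.mem_sup.mp hy
      have h1 : B (x : E) k = 0 := by
        rw [hskew]
        rw [LinearMap.mem_ker] at hk
        simp [hk]
      have h2 : B (x : E) w = 0 := hx ⟨w, hw⟩
      simp [map_add, h1, h2]
    have hx0 : (x : E) ∈ (LinearMap.ker B) ⊓ W := ⟨hker, x.2⟩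
    rw [hW.inf_eq_bot] at hx0
    exact Subtype.ext hx0
  have heven := even_finrank_of_skew_nondeg (B.restrict W)
    (fun x y => hskew (x : E) (y : E)) hnd
  have hrank := Submodule.finrank_add_eq_of_isCompl hW
  obtain ⟨c, hc⟩ := heven
  exact ⟨c, by omega⟩

set_option maxHeartbeats 1000000 in
/-- Core argument, with the second factor abstracted away from `Dual ℝ X`. -/
private lemma lagrangian_parity_core
    (X Y : Type*) [AddCommGroup X] [Module ℝ X] [FiniteDimensional ℝ X]
    [AddCommGroup Y] [Module ℝ Y] [FiniteDimensional ℝ Y]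
    (φ : Y ≃ₗ[ℝ] Module.Dual ℝ X)
    (L : Submodule ℝ (X × Y))
    (hdim : Module.finrank ℝ L = Module.finrank ℝ X)
    (hp : ∀ x ∈ L, ∀ y ∈ L, φ x.2 y.1 + φ y.2 x.1 = 0) :
    Even ((Module.finrank ℝ ↥(Submodule.map (LinearMap.fst ℝ X Y) L) : ℤ) -
        Module.finrank ℝ ↥(L ⊓ LinearMap.range (LinearMap.inl ℝ X Y))) ∧
    Even ((Module.finrank ℝ X : ℤ) -
        Module.finrank ℝ ↥(L ⊓ LinearMap.range (LinearMap.inl ℝ X Y)) -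
        Module.finrank ℝ ↥(L ⊓ LinearMap.range (LinearMap.inr ℝ X Y))) := by
  classical
  set n := Module.finrank ℝ X with hn
  set P := L ⊓ LinearMap.range (LinearMap.inl ℝ X Y) with hP
  set Q := L ⊓ LinearMap.range (LinearMap.inr ℝ X Y) with hQ
  set R := Submodule.map (LinearMap.fst ℝ X Y) L with hR
  have hPmem : ∀ x ∈ P, x.2 = (0 : Y) := by
    intro x hx
    obtain ⟨v, hv⟩ := hx.2
    rw [← hv]
    rfl
  have hQmem : ∀ x ∈ Q, x.1 = (0 : X) := by
    intro x hx
    obtain ⟨ξ, hξ⟩ := hx.2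
    rw [← hξ]
    rfl
  have hQpair : ∀ q ∈ Q, ∀ y ∈ L, φ q.2 y.1 = 0 := by
    intro q hq y hy
    have h := hp q hq.1 y hy
    rw [hQmem q hq] at h
    simpa using h
  -- Step A : finrank R + finrank Q = n
  have stepA : Module.finrank ℝ R + Module.finrank ℝ Q = n := by
    set f : L →ₗ[ℝ] X := (LinearMap.fst ℝ X Y).comp L.subtype with hf
    have hrn := LinearMap.finrank_range_add_finrank_ker (K := ℝ) (V := ↥L) (V₂ := X) f
    have hrange : LinearMap.range f = R := by
      rw [hf, LinearMap.range_comp, Submodule.range_subtype]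
    have hker : LinearMap.ker f = Submodule.comap L.subtype Q := by
      rw [hf, LinearMap.ker_comp, LinearMap.ker_fst, hQ, Submodule.comap_inf,
        Submodule.comap_subtype_self, top_inf_eq]
    have hfin : Module.finrank ℝ (Submodule.comap L.subtype Q) = Module.finrank ℝ Q :=
      LinearEquiv.finrank_eq (Submodule.comapSubtypeEquivOfLe (inf_le_left : Q ≤ L))
    rw [hrange, hker, hfin, hdim] at hrn
    exact hrn
  -- Q' = image of Q in Dual X
  set A : X × Y →ₗ[ℝ] Module.Dual ℝ X :=
    (φ : Y →ₗ[ℝ] Module.Dual ℝ X).comp (LinearMap.snd ℝ X Y) with hA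
  set Q' := Submodule.map A Q with hQ'
  have hQ'fin : Module.finrank ℝ Q' = Module.finrank ℝ Q := by
    set g : Q →ₗ[ℝ] Module.Dual ℝ X := A.comp Q.subtype with hg
    have hrn := LinearMap.finrank_range_add_finrank_ker
      (K := ℝ) (V := ↥Q) (V₂ := Module.Dual ℝ X) g
    have hrange : LinearMap.range g = Q' := by
      rw [hg, LinearMap.range_comp, Submodule.range_subtype]
    have hker : LinearMap.ker g = ⊥ := by
      rw [Submodule.eq_bot_iff]
      intro x hx
      rw [LinearMap.mem_ker] at hx
      have h1 : (x : X × Y).1 = 0 := hQmem _ x.2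
      have h2 : φ (x : X × Y).2 = 0 := hx
      have h2' : (x : X × Y).2 = 0 := by
        have := φ.map_eq_zero_iff.mp h2
        exact this
      exact Subtype.ext (Prod.ext h1 h2')
    rw [hrange, hker] at hrn
    have hbot : Module.finrank ℝ (⊥ : Submodule ℝ ↥Q) = 0 := finrank_bot ℝ ↥Q
    omega
  -- Q' is the dual annihilator of R
  have hQ'le : Q' ≤ R.dualAnnihilator := by
    rintro ξ ⟨q, hq, rfl⟩
    rw [Submodule.mem_dualAnnihilator]
    rintro v ⟨y, hy, rfl⟩
    exact hQpair q hq y hy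
  have hannfin : Module.finrank ℝ R.dualAnnihilator + Module.finrank ℝ R = n := by
    have h1 : Module.finrank ℝ (X ⧸ R) = Module.finrank ℝ R.dualAnnihilator :=
      LinearEquiv.finrank_eq (Subspace.quotEquivAnnihilator R)
    have h2 := Submodule.finrank_quotient_add_finrank R
    omega
  have hQ'eq : Q' = R.dualAnnihilator := by
    apply Submodule.eq_of_le_of_finrank_le hQ'le
    omega
  -- the alternating form on L
  set B : LinearMap.BilinForm ℝ L :=
    LinearMap.mk₂ ℝ
      (fun x y => φ (x : X × Y).2 (y : X × Y).1)
      (fun x x' y => by simp)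
      (fun c x y => by simp)
      (fun x y y' => by simp)
      (fun c x y => by simp) with hB
  have hBapp : ∀ x y : L, B x y = φ (x : X × Y).2 (y : X × Y).1 :=
    fun x y => rfl
  have halt : ∀ x : L, B x x = 0 := by
    intro x
    have h := hp x x.2 x x.2
    rw [hBapp]
    linarith
  -- ker B = P ⊔ Q (pulled back to L)
  have hkerB : LinearMap.ker B = Submodule.comap L.subtype (P ⊔ Q) := by
    ext x
    rw [LinearMap.mem_ker, Submodule.mem_comap, Submodule.subtype_apply]
    constructor
    · intro hx
      have hξ : φ (x : X × Y).2 ∈ R.dualAnnihilator := by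
        rw [Submodule.mem_dualAnnihilator]
        rintro v ⟨y, hy, rfl⟩
        have := congrArg (fun f => f ⟨y, hy⟩) hx
        simpa [hBapp] using this
      rw [← hQ'eq] at hξ
      obtain ⟨q, hq, hqξ⟩ := hξ
      have hq1 : q.1 = 0 := hQmem q hq
      have hqL : q ∈ L := hq.1
      have hq2 : q.2 = (x : X × Y).2 := by
        have : φ q.2 = φ (x : X × Y).2 := hqξ
        exact φ.injective this
      have hxq : (x : X × Y) - q ∈ P := by
        refine ⟨L.sub_mem x.2 hqL, ⟨(x : X × Y).1 - q.1, ?_⟩⟩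
        apply Prod.ext
        · rfl
        · show (0 : Y) = (x : X × Y).2 - q.2
          rw [hq2, sub_self]
      have hsplit : (x : X × Y) = ((x : X × Y) - q) + q :=
        (sub_add_cancel _ q).symm
      rw [hsplit]
      exact Submodule.add_mem _ (Submodule.mem_sup_left hxq) (Submodule.mem_sup_right hq)
    · intro hx
      obtain ⟨p, hp', q, hq, hpq⟩ := Submodule.mem_sup.mp hx
      apply LinearMap.ext
      intro y
      rw [hBapp]
      have hx2 : (x : X × Y).2 = p.2 + q.2 := by rw [← hpq]; rfl
      rw [hx2]
      have h1 : p.2 = 0 := hPmem p hp'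
      have h2 : φ q.2 (y : X × Y).1 = 0 := hQpair q hq y y.2
      simp [h1, h2]
  -- P ⊓ Q = ⊥
  have hPQ : P ⊓ Q = ⊥ := by
    rw [Submodule.eq_bot_iff]
    intro x hx
    exact Prod.ext (hQmem x hx.2) (hPmem x hx.1)
  have hsup : Module.finrank ℝ ↥(P ⊔ Q) = Module.finrank ℝ P + Module.finrank ℝ Q := by
    have h := Submodule.finrank_sup_add_finrank_inf_eq P Q
    rw [hPQ] at h
    have hbot : Module.finrank ℝ (⊥ : Submodule ℝ (X × Y)) = 0 := finrank_bot ℝ (X × Y)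
    omega
  have hPQle : P ⊔ Q ≤ L := sup_le inf_le_left inf_le_left
  have hcomapfin : Module.finrank ℝ ↥(Submodule.comap L.subtype (P ⊔ Q))
      = Module.finrank ℝ P + Module.finrank ℝ Q :=
    (LinearEquiv.finrank_eq (Submodule.comapSubtypeEquivOfLe hPQle)).trans hsup
  -- parity
  have heven := even_finrank_sub_ker (E := ↥L) B halt (Submodule.comap L.subtype (P ⊔ Q)) hkerB
  rw [hdim, hcomapfin] at heven
  have hle : Module.finrank ℝ P + Module.finrank ℝ Q ≤ n := by
    rw [← hcomapfin, ← hdim]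
    exact Submodule.finrank_le (Submodule.comap L.subtype (P ⊔ Q))
  obtain ⟨c, hc⟩ := heven
  constructor
  · exact ⟨(c : ℤ), by omega⟩
  · exact ⟨(c : ℤ), by omega⟩

/-- For a Lagrangian `L ⊆ V ⊕ V*`, the integer `dim ρ(L) − dim(L ∩ V)` is even;
equivalently, `n − dim(L ∩ V) − dim(L ∩ V*)` is even. -/
theorem lagrangian_parity
    (V : Type*) [AddCommGroup V] [Module ℝ V] [FiniteDimensional ℝ V]
    (L : Submodule ℝ (V × Module.Dual ℝ V)) (hL : IsLagrangian L) :
    Even ((Module.finrank ℝ ↥(Submodule.map (LinearMap.fst ℝ V (Module.Dual ℝ V)) L) : ℤ) -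
        Module.finrank ℝ ↥(L ⊓ LinearMap.range (LinearMap.inl ℝ V (Module.Dual ℝ V)))) ∧
    Even ((Module.finrank ℝ V : ℤ) -
        Module.finrank ℝ ↥(L ⊓ LinearMap.range (LinearMap.inl ℝ V (Module.Dual ℝ V))) -
        Module.finrank ℝ ↥(L ⊓ LinearMap.range (LinearMap.inr ℝ V (Module.Dual ℝ V)))) := by
  obtain ⟨hdim, hpair⟩ := hL
  refine lagrangian_parity_core V (Module.Dual ℝ V)
    (LinearEquiv.refl ℝ (Module.Dual ℝ V)) L hdim ?_
  intro x hx y hy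
  have h := hpair x hx y hy
  unfold diracPairing at h
  simp only [LinearEquiv.refl_apply]
  linarith
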